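/- Strong gauge duality for fevc: under the conic assumptions, for every Z ∈ K* the infimum defining fevc(Z) is attained, and fevc(Z) = max{⟨Z,X⟩ : X ∈ K, s_Uᵀ X s_U ≤ 1 for all U ∈ F(A)}, with this maximum also attained. In particular, fevc is the dual gauge of maxq. -/

import Mathlib

open Matrix Finset

noncomputable section

/-- The trace inner product `⟨X,Y⟩ = tr(XY)` on symmetric matrices. -/
def ip {n : ℕ} (X Y : Matrix (Fin n) (Fin n) ℝ) : ℝ := (X * Y).trace

/-- The signed incidence vector `s_U ∈ {±1}ⁿ` of `U ⊆ [n]`. -/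
def sgn {n : ℕ} (U : Finset (Fin n)) : Fin n → ℝ := fun i => if i ∈ U then 1 else -1

/-- The rank-one sign matrix `s_U s_Uᵀ`. -/
def stensor {n : ℕ} (U : Finset (Fin n)) : Matrix (Fin n) (Fin n) ℝ :=
  fun i j => sgn U i * sgn U j

/-- The quadratic form `vᵀ W v`. -/
def qform {n : ℕ} (W : Matrix (Fin n) (Fin n) ℝ) (v : Fin n → ℝ) : ℝ :=
  ∑ i, ∑ j, v i * W i j * v j

/-- The dual cone (within the space `Sym(n)` of symmetric matrices) of a set `S ⊆ Sym(n)`. -/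
def dualSet {n : ℕ} (S : Set (Matrix (Fin n) (Fin n) ℝ)) : Set (Matrix (Fin n) (Fin n) ℝ) :=
  {X | X.IsSymm ∧ ∀ Y ∈ S, 0 ≤ ip X Y}

/-- The data of the conic framework: closed convex cones `A`, `K̂` of symmetric matrices,
and a linear map `L`. -/
structure ConicSetting (n k : ℕ) where
  A : Set (Matrix (Fin n) (Fin n) ℝ)
  Khat : Set (Matrix (Fin n) (Fin n) ℝ)
  L : Matrix (Fin n) (Fin n) ℝ →ₗ[ℝ] (Fin k → ℝ)
  A_symm : ∀ X ∈ A, X.IsSymm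
  A_closed : IsClosed A
  A_smul : ∀ c : ℝ, 0 ≤ c → ∀ X ∈ A, c • X ∈ A
  A_add : ∀ X ∈ A, ∀ Y ∈ A, X + Y ∈ A
  Khat_symm : ∀ X ∈ Khat, X.IsSymm
  Khat_closed : IsClosed Khat
  Khat_smul : ∀ c : ℝ, 0 ≤ c → ∀ X ∈ Khat, c • X ∈ Khat
  Khat_add : ∀ X ∈ Khat, ∀ Y ∈ Khat, X + Y ∈ Khat

namespace ConicSetting

variable {n k : ℕ} (S : ConicSetting n k)

/-- `K := K̂ ∩ ker L`. -/
def K : Set (Matrix (Fin n) (Fin n) ℝ) := {X | X ∈ S.Khat ∧ S.L X = 0}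

/-- `F(A) := {U ⊆ [n] : s_U s_Uᵀ ∈ A}`. -/
def FA : Set (Finset (Fin n)) := {U | stensor U ∈ S.A}

/-- The range of the adjoint of `L` restricted to `Sym(n)`, i.e. the orthogonal complement
of `ker L ∩ Sym(n)` inside `Sym(n)`. -/
def rangeLstar : Set (Matrix (Fin n) (Fin n) ℝ) :=
  {Q | Q.IsSymm ∧ ∀ Y : Matrix (Fin n) (Fin n) ℝ, Y.IsSymm → S.L Y = 0 → ip Q Y = 0}

/-- `lift := K̂* + range(L*)`. -/
def lift : Set (Matrix (Fin n) (Fin n) ℝ) :=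
  {X | ∃ P ∈ dualSet S.Khat, ∃ Q ∈ S.rangeLstar, X = P + Q}

/-- `K* := {X ∈ ker L : ⟨X,Y⟩ ≥ 0 for all Y ∈ K}` (within `Sym(n)`). -/
def Kstar : Set (Matrix (Fin n) (Fin n) ℝ) :=
  {X | X.IsSymm ∧ S.L X = 0 ∧ ∀ Y ∈ S.K, 0 ≤ ip X Y}

/-- The convex cone generated by `CUT^A = conv{s_U s_Uᵀ : U ∈ F(A)}`. -/
def coneCUT : Set (Matrix (Fin n) (Fin n) ℝ) :=
  {X | ∃ y : Finset (Fin n) → ℝ, (∀ U, 0 ≤ y U) ∧ (∀ U, U ∉ S.FA → y U = 0) ∧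
    X = ∑ U : Finset (Fin n), y U • stensor U}

/-- The conic assumptions: `A ⊆ PSD(n)`, `K ⊆ A*`, `cone(CUT^A)` has nonempty interior in
`Sym(n)`, and `K̂` has a nonzero Slater point in `ker L` (interior taken in `Sym(n)`). -/
structure Assumptions : Prop where
  A_psd : ∀ X ∈ S.A, X.PosSemidef
  K_sub_Astar : S.K ⊆ dualSet S.A
  cut_interior : (interior {X : {M : Matrix (Fin n) (Fin n) ℝ // M.IsSymm} |
      (X : Matrix (Fin n) (Fin n) ℝ) ∈ S.coneCUT}).Nonempty
  Khat_slater : ∃ X : {M : Matrix (Fin n) (Fin n) ℝ // M.IsSymm},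
      (X : Matrix (Fin n) (Fin n) ℝ) ≠ 0 ∧
      X ∈ interior {M : {M : Matrix (Fin n) (Fin n) ℝ // M.IsSymm} |
        (M : Matrix (Fin n) (Fin n) ℝ) ∈ S.Khat} ∧
      S.L X = 0

/-- `maxq(W) := max{s_Uᵀ W s_U : U ∈ F(A)}`. -/
def maxq (W : Matrix (Fin n) (Fin n) ℝ) : ℝ :=
  sSup {r | ∃ U ∈ S.FA, r = qform W (sgn U)}

/-- `ν(W) := max{⟨W,Y⟩ : Y ∈ A, diag(Y) = 1}`. -/
def nu (W : Matrix (Fin n) (Fin n) ℝ) : ℝ :=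
  sSup {r | ∃ Y ∈ S.A, (∀ i, Y i i = 1) ∧ r = ip W Y}

/-- `y ∈ ℝ₊^{F(A)}` is a tensor sign cover for `Z`:
`∑_{U ∈ F(A)} y_U s_U s_Uᵀ ⪰_lift Z`. -/
def CoverFeas (Z : Matrix (Fin n) (Fin n) ℝ) (y : Finset (Fin n) → ℝ) : Prop :=
  (∀ U, 0 ≤ y U) ∧ (∀ U, U ∉ S.FA → y U = 0) ∧
  (∑ U : Finset (Fin n), y U • stensor U) - Z ∈ S.lift

/-- `fevc(Z)`: minimum total weight of a tensor sign cover of `Z`. -/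
def fevc (Z : Matrix (Fin n) (Fin n) ℝ) : ℝ :=
  sInf {r | ∃ y, S.CoverFeas Z y ∧ r = ∑ U : Finset (Fin n), y U}

/-- `ν°(Z) := inf{μ ≥ 0 : ∃ Y ∈ A, diag(Y) = μ·1, Y ⪰_lift Z}`. -/
def nuPolar (Z : Matrix (Fin n) (Fin n) ℝ) : ℝ :=
  sInf {μ | 0 ≤ μ ∧ ∃ Y ∈ S.A, (∀ i, Y i i = μ) ∧ Y - Z ∈ S.lift}

end ConicSetting
/-! ### Auxiliary infrastructure -/

section AuxInfra

variable {n : ℕ}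

abbrev Mn (n : ℕ) := Matrix (Fin n) (Fin n) ℝ
abbrev En (n : ℕ) := EuclideanSpace ℝ (Fin n × Fin n)

/-- The entrywise (Frobenius) inner product. -/
def ipf {n : ℕ} (X Y : Mn n) : ℝ := ∑ i, ∑ j, X i j * Y i j

/-- Linear identification of matrices with a Euclidean space. -/
def eMap {n : ℕ} : Mn n ≃ₗ[ℝ] En n where
  toFun X := (WithLp.equiv 2 _).symm fun p => X p.1 p.2
  invFun y := fun i j => y (i, j)
  map_add' _ _ := rfl
  map_smul' _ _ := rfl
  left_inv _ := rfl
  right_inv _ := rfl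

lemma continuous_entry (i j : Fin n) : Continuous fun X : Mn n => X i j :=
  (continuous_apply j).comp (continuous_apply i)

lemma eMap_cont : Continuous (eMap : Mn n → En n) :=
  (PiLp.continuous_toLp 2 _).comp (continuous_pi fun p => continuous_entry p.1 p.2)

lemma eMap_symm_cont : Continuous ((eMap : Mn n ≃ₗ[ℝ] En n).symm : En n → Mn n) :=
  continuous_pi fun i => continuous_pi fun j =>
    (continuous_apply (i, j)).comp (PiLp.continuous_ofLp 2 _)

/-- Homeomorphism version of `eMap`. -/
def eH {n : ℕ} : Mn n ≃ₜ En n :=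
  { (eMap : Mn n ≃ₗ[ℝ] En n).toEquiv with
    continuous_toFun := eMap_cont
    continuous_invFun := eMap_symm_cont }

lemma eH_apply (X : Mn n) : (eH X : En n) = eMap X := rfl

lemma inner_eMap (X Y : Mn n) : (inner ℝ (eMap X) (eMap Y) : ℝ) = ipf X Y := by
  simp [PiLp.inner_apply, RCLike.inner_apply, ipf, Fintype.sum_prod_type, eMap]
  exact Finset.sum_congr rfl fun i _ => Finset.sum_congr rfl fun j _ => mul_comm _ _

lemma norm_eMap_sq (X : Mn n) : ‖(eMap X : En n)‖ ^ 2 = ipf X X := by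
  rw [← inner_eMap X X, real_inner_self_eq_norm_sq]

lemma ip_eq (X Y : Mn n) : ip X Y = ∑ i, ∑ j, X i j * Y j i := by
  simp [ip, Matrix.trace, Matrix.mul_apply, Matrix.diag]

lemma ip_eq_ipf {X Y : Mn n} (h : Y.IsSymm) : ip X Y = ipf X Y := by
  rw [ip_eq, ipf]; exact Finset.sum_congr rfl fun i _ => Finset.sum_congr rfl fun j _ => by
    rw [h.apply i j]

lemma ipf_comm (X Y : Mn n) : ipf X Y = ipf Y X := by
  simp [ipf, mul_comm]

lemma ip_eq_ipf' {X Y : Mn n} (h : X.IsSymm) : ip X Y = ipf X Y := by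
  rw [ip_eq, ipf]
  refine Finset.sum_comm.trans ?_
  exact Finset.sum_congr rfl fun j _ => Finset.sum_congr rfl fun i _ => by
    rw [← h.apply i j, mul_comm]

lemma ipf_add_left (X Y Z : Mn n) : ipf (X + Y) Z = ipf X Z + ipf Y Z := by
  simp [ipf, add_mul, Finset.sum_add_distrib, Matrix.add_apply]

lemma ipf_smul_left (c : ℝ) (X Z : Mn n) : ipf (c • X) Z = c * ipf X Z := by
  simp [ipf, Finset.mul_sum, Matrix.smul_apply, mul_assoc]

lemma ipf_sub_left (X Y Z : Mn n) : ipf (X - Y) Z = ipf X Z - ipf Y Z := by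
  simp [ipf, sub_mul, Finset.sum_sub_distrib, Matrix.sub_apply]

lemma ipf_neg_left (X Z : Mn n) : ipf (-X) Z = - ipf X Z := by
  simp [ipf, Matrix.neg_apply]

lemma ipf_zero_left (Z : Mn n) : ipf 0 Z = 0 := by simp [ipf]

lemma ipf_sum_left {ι : Type*} (s : Finset ι) (f : ι → Mn n) (Z : Mn n) :
    ipf (∑ u ∈ s, f u) Z = ∑ u ∈ s, ipf (f u) Z := by
  classical
  induction s using Finset.induction with
  | empty => simp [ipf_zero_left]
  | insert _ _ h ih => rw [Finset.sum_insert h, Finset.sum_insert h, ipf_add_left, ih]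

lemma qform_eq_ipf (X : Mn n) (U : Finset (Fin n)) : qform X (sgn U) = ipf (stensor U) X := by
  simp [qform, ipf, stensor]
  exact Finset.sum_congr rfl fun i _ => Finset.sum_congr rfl fun j _ => by ring

lemma continuous_ipf_left (Z : Mn n) : Continuous fun X : Mn n => ipf X Z := by
  unfold ipf
  exact continuous_finset_sum _ fun i _ => continuous_finset_sum _ fun j _ =>
    (continuous_entry i j).mul continuous_const

lemma continuous_ipf_right (Z : Mn n) : Continuous fun X : Mn n => ipf Z X := by
  simpa [ipf_comm] using continuous_ipf_left (n := n) Z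

lemma isClosed_isSymm : IsClosed {X : Mn n | X.IsSymm} := by
  have : {X : Mn n | X.IsSymm} = {X : Mn n | Xᵀ = X} := rfl
  rw [this]
  exact isClosed_eq (by exact continuous_pi fun i => continuous_pi fun j => continuous_entry j i)
    continuous_id

lemma stensor_isSymm (U : Finset (Fin n)) : (stensor U).IsSymm := by
  ext i j; simp [stensor, Matrix.transpose_apply, mul_comm]

/-- symmetric part -/
def symPart {n : ℕ} (F : Mn n) : Mn n :=
  (1/2 : ℝ) • (F + Fᵀ)

lemma symPart_isSymm (F : Mn n) : (symPart F).IsSymm := by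
  unfold symPart Matrix.IsSymm
  rw [Matrix.transpose_smul, Matrix.transpose_add, Matrix.transpose_transpose, add_comm]

lemma ipf_symPart {F Y : Mn n} (hY : Y.IsSymm) : ipf (symPart F) Y = ipf F Y := by
  have h1 : ipf Fᵀ Y = ipf F Y := by
    unfold ipf
    rw [Finset.sum_comm]
    exact Finset.sum_congr rfl fun i _ => Finset.sum_congr rfl fun j _ => by
      rw [Matrix.transpose_apply, hY.apply i j]
  rw [symPart, ipf_smul_left, ipf_add_left, h1]; ring

lemma exists_repr (f : En n →L[ℝ] ℝ) : ∃ G : Mn n, ∀ Y : Mn n, f (eMap Y) = ipf G Y := by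
  set v := (InnerProductSpace.toDual ℝ (En n)).symm f with hv
  refine ⟨eMap.symm v, fun Y => ?_⟩
  rw [← inner_eMap, LinearEquiv.apply_symm_apply, hv]
  exact (InnerProductSpace.toDual_symm_apply).symm

/-- Separation of a symmetric matrix from a closed convex set of symmetric matrices. -/
lemma sep_point_closed {C : Set (Mn n)} (hCs : ∀ Y ∈ C, Matrix.IsSymm Y)
    (hconv : Convex ℝ C) (hclosed : IsClosed C) {X : Mn n} (hX : X.IsSymm) (hXC : X ∉ C) :
    ∃ (G : Mn n) (u : ℝ), G.IsSymm ∧ ipf G X < u ∧ ∀ Y ∈ C, u < ipf G Y := by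
  have hC' : IsClosed ((eMap : Mn n → En n) '' C) := by
    have : (eMap : Mn n → En n) '' C = (eH : Mn n → En n) '' C := rfl
    rw [this, Homeomorph.isClosed_image]; exact hclosed
  have hconv' : Convex ℝ ((eMap : Mn n → En n) '' C) := hconv.linear_image eMap.toLinearMap
  have hX' : (eMap X : En n) ∉ (eMap : Mn n → En n) '' C := by
    rintro ⟨Y, hY, hEq⟩
    exact hXC (by rwa [← eMap.injective hEq])
  obtain ⟨f, u, hfu, hfC⟩ := geometric_hahn_banach_point_closed hconv' hC' hX'
  obtain ⟨G₀, hG₀⟩ := exists_repr f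
  refine ⟨symPart G₀, u, symPart_isSymm G₀, ?_, fun Y hY => ?_⟩
  · rw [ipf_symPart hX, ← hG₀]; exact hfu
  · rw [ipf_symPart (hCs Y hY), ← hG₀]
    exact hfC _ ⟨Y, hY, rfl⟩

/-- Separation of a symmetric matrix from a closed convex *cone* of symmetric matrices. -/
lemma sep_point_closed_cone {C : Set (Mn n)} (hCs : ∀ Y ∈ C, Matrix.IsSymm Y)
    (hconv : Convex ℝ C) (hclosed : IsClosed C) (h0 : (0 : Mn n) ∈ C)
    (hsmul : ∀ c : ℝ, 0 ≤ c → ∀ Y ∈ C, c • Y ∈ C)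
    {X : Mn n} (hX : X.IsSymm) (hXC : X ∉ C) :
    ∃ G : Mn n, G.IsSymm ∧ (∀ Y ∈ C, 0 ≤ ipf G Y) ∧ ipf G X < 0 := by
  obtain ⟨G, u, hGsym, hGX, hGC⟩ := sep_point_closed hCs hconv hclosed hX hXC
  have hu0 : u < 0 := by simpa [ipf] using hGC 0 h0
  refine ⟨G, hGsym, fun Y hY => ?_, lt_trans hGX hu0⟩
  by_contra hneg
  push_neg at hneg
  have ht : (0:ℝ) < 2 * u / ipf G Y := div_pos_of_neg_of_neg (by linarith) hneg
  have h2 := hGC _ (hsmul _ ht.le Y hY)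
  have h3 : ipf G ((2 * u / ipf G Y) • Y) = 2 * u := by
    rw [ipf_comm, ipf_smul_left, ipf_comm Y G, div_mul_cancel₀ _ (ne_of_lt hneg)]
  rw [h3] at h2; linarith

end AuxInfra
section AuxS

variable {n k : ℕ} (S : ConicSetting n k)

lemma continuous_ip_left (Y : Mn n) : Continuous fun X : Mn n => ip X Y := by
  simp only [ip_eq]
  exact continuous_finset_sum _ fun i _ => continuous_finset_sum _ fun j _ =>
    (continuous_entry i j).mul continuous_const

lemma isClosed_dualSet (T : Set (Mn n)) : IsClosed (dualSet T) := by
  have h : dualSet T = {X : Mn n | X.IsSymm} ∩ ⋂ Y ∈ T, {X : Mn n | 0 ≤ ip X Y} := by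
    ext X
    simp only [dualSet, Set.mem_setOf_eq, Set.mem_inter_iff, Set.mem_iInter]
  rw [h]
  exact isClosed_isSymm.inter (isClosed_biInter fun Y _ =>
    isClosed_le continuous_const (continuous_ip_left Y))

lemma isClosed_rangeLstar : IsClosed (S.rangeLstar) := by
  have h : S.rangeLstar = {X : Mn n | X.IsSymm} ∩
      ⋂ Y ∈ {Y : Mn n | Y.IsSymm ∧ S.L Y = 0}, {Q : Mn n | ip Q Y = 0} := by
    ext Q
    simp only [ConicSetting.rangeLstar, Set.mem_setOf_eq, Set.mem_inter_iff, Set.mem_iInter]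
    tauto
  rw [h]
  exact isClosed_isSymm.inter (isClosed_biInter fun Y _ =>
    isClosed_eq (continuous_ip_left Y) continuous_const)

lemma interior_symm_subtype {s : Set (Mn n)} (X : {M : Mn n // M.IsSymm})
    (h : X ∈ interior {M : {M : Mn n // M.IsSymm} | (M : Mn n) ∈ s}) :
    ∃ ε > 0, ∀ M : Mn n, M.IsSymm → ‖(eMap M - eMap (X : Mn n) : En n)‖ < ε → M ∈ s := by
  rw [mem_interior] at h
  obtain ⟨U, hUs, hUopen, hXU⟩ := h
  rw [isOpen_induced_iff] at hUopen
  obtain ⟨V, hV, hVU⟩ := hUopen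
  have hXV : (X : Mn n) ∈ V := by
    have : X ∈ Subtype.val ⁻¹' V := by rw [hVU]; exact hXU
    exact this
  have hVopen : IsOpen ((eH.symm : En n → Mn n) ⁻¹' V) := hV.preimage eH.symm.continuous
  have hmem : (eMap (X : Mn n) : En n) ∈ (eH.symm : En n → Mn n) ⁻¹' V := by
    have : (eH.symm : En n → Mn n) (eMap (X : Mn n)) = (X : Mn n) :=
      eMap.toEquiv.symm_apply_apply _
    simpa [this] using hXV
  obtain ⟨ε, hε, hball⟩ := Metric.isOpen_iff.mp hVopen _ hmem
  refine ⟨ε, hε, fun M hM hdist => ?_⟩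
  have : (eMap M : En n) ∈ Metric.ball (eMap (X : Mn n) : En n) ε := by
    rw [Metric.mem_ball, dist_eq_norm]; exact hdist
  have hMV : M ∈ V := by
    have := hball this
    simpa [show (eH.symm : En n → Mn n) (eMap M) = M from eMap.toEquiv.symm_apply_apply _]
      using this
  have : (⟨M, hM⟩ : {M : Mn n // M.IsSymm}) ∈ U := by rw [← hVU]; exact hMV
  exact hUs this

lemma ball_dual_bound {s : Set (Mn n)} {x₀ : Mn n} (hx₀ : x₀.IsSymm) {ε : ℝ} (hε : 0 < ε)
    (hball : ∀ M : Mn n, M.IsSymm → ‖(eMap M - eMap x₀ : En n)‖ < ε → M ∈ s)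
    {P : Mn n} (hP : P.IsSymm) (hPd : ∀ Y ∈ s, 0 ≤ ipf P Y) :
    (ε/2) * ‖(eMap P : En n)‖ ≤ ipf P x₀ := by
  rcases eq_or_ne P 0 with rfl | hP0
  · simp [ipf]
  have hr : (0:ℝ) < ‖(eMap P : En n)‖ := by
    rw [norm_pos_iff]
    simpa using fun hc => hP0 (eMap.map_eq_zero_iff.mp hc)
  set r := ‖(eMap P : En n)‖
  set M : Mn n := x₀ - ((ε/2)/r) • P with hM
  have hMsym : M.IsSymm := hx₀.sub (hP.smul _)
  have hMs : M ∈ s := by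
    apply hball M hMsym
    have : (eMap M - eMap x₀ : En n) = -(((ε/2)/r) • eMap P) := by
      rw [hM, map_sub, _root_.map_smul]; abel
    rw [this, norm_neg, norm_smul]
    rw [Real.norm_eq_abs, abs_of_pos (by positivity)]
    rw [div_mul_cancel₀ _ (ne_of_gt hr)]
    linarith
  have h0 := hPd M hMs
  have hexp : ipf P M = ipf P x₀ - ((ε/2)/r) * ipf P P := by
    rw [hM, ipf_comm, ipf_sub_left, ipf_smul_left, ipf_comm x₀ P, ipf_comm P P]
  have hPP : ipf P P = r ^ 2 := (norm_eMap_sq P).symm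
  rw [hexp, hPP] at h0
  have : ((ε/2)/r) * r ^ 2 = (ε/2) * r := by field_simp
  linarith [this ▸ h0]

lemma khat_convex : Convex ℝ S.Khat := fun x hx y hy a b ha hb _ =>
  S.Khat_add _ (S.Khat_smul a ha _ hx) _ (S.Khat_smul b hb _ hy)

lemma mem_Khat_of_dual (h0 : (0:Mn n) ∈ S.Khat) {G : Mn n} (hG : G.IsSymm)
    (h : ∀ P ∈ dualSet S.Khat, 0 ≤ ipf G P) : G ∈ S.Khat := by
  by_contra hGK
  obtain ⟨H, hHsym, hHpos, hHG⟩ := sep_point_closed_cone S.Khat_symm (khat_convex S)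
    S.Khat_closed h0 S.Khat_smul hG hGK
  have hHd : H ∈ dualSet S.Khat := ⟨hHsym, fun Y hY => by
    rw [ip_eq_ipf (S.Khat_symm Y hY)]; exact hHpos Y hY⟩
  have := h H hHd
  rw [ipf_comm] at hHG
  linarith

/-- The subspace `S₀ = Sym ∩ ker L`. -/
def S0sub : Submodule ℝ (Mn n) where
  carrier := {Y : Mn n | Y.IsSymm ∧ S.L Y = 0}
  add_mem' := fun ha hb => ⟨ha.1.add hb.1, by rw [map_add, ha.2, hb.2, add_zero]⟩
  zero_mem' := ⟨by simp [Matrix.IsSymm], map_zero _⟩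
  smul_mem' := fun c Y h => ⟨h.1.smul c, by rw [_root_.map_smul, h.2, smul_zero]⟩

lemma Lzero_of_perp {G : Mn n} (hG : G.IsSymm)
    (h : ∀ Q ∈ S.rangeLstar, ipf G Q = 0) : S.L G = 0 := by
  set W : Submodule ℝ (En n) := (S0sub S).map eMap.toLinearMap with hW
  obtain ⟨w, hw, w', hw', hsum⟩ := W.exists_add_mem_mem_orthogonal (eMap G)
  obtain ⟨Y₀, hY₀, hY₀w⟩ := hw
  have hY₀w' : (eMap Y₀ : En n) = w := hY₀w
  have hwW : w ∈ W := ⟨Y₀, hY₀, hY₀w⟩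
  set Q₀ : Mn n := G - Y₀ with hQ₀
  have hQ₀sym : Q₀.IsSymm := hG.sub hY₀.1
  have heQ₀ : (eMap Q₀ : En n) = w' := by
    rw [hQ₀, map_sub, hY₀w', hsum]; abel
  have hQ₀R : Q₀ ∈ S.rangeLstar := by
    refine ⟨hQ₀sym, fun Y hYs hYL => ?_⟩
    rw [ip_eq_ipf hYs, ← inner_eMap, heQ₀]
    have hYW : (eMap Y : En n) ∈ W := ⟨Y, ⟨hYs, hYL⟩, rfl⟩
    have := (Submodule.mem_orthogonal W w').mp hw' _ hYW
    rwa [real_inner_comm] at this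
  have h0 := h Q₀ hQ₀R
  have hinner : ipf G Q₀ = (inner ℝ w w' : ℝ) + (inner ℝ w' w' : ℝ) := by
    rw [← inner_eMap, heQ₀, hsum, inner_add_left]
  have hww' : (inner ℝ w w' : ℝ) = 0 := (Submodule.mem_orthogonal W w').mp hw' w hwW
  have hw'0 : w' = 0 := by
    rw [h0] at hinner
    have : (inner ℝ w' w' : ℝ) = 0 := by rw [hww'] at hinner; linarith
    exact inner_self_eq_zero.mp this
  have : Q₀ = 0 := by
    have := heQ₀
    rw [hw'0] at this
    exact eMap.map_eq_zero_iff.mp this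
  have hGY : G = Y₀ := by rw [hQ₀] at this; rwa [sub_eq_zero] at this
  rw [hGY]; exact hY₀.2

end AuxS
section AuxLift

variable {n k : ℕ} (S : ConicSetting n k)

instance : SequentialSpace (Matrix (Fin n) (Fin n) ℝ) :=
  inferInstanceAs (SequentialSpace (Fin n → Fin n → ℝ))

lemma ip_add_left' (X Y Z : Mn n) : ip (X + Y) Z = ip X Z + ip Y Z := by
  simp [ip, add_mul]

lemma ip_smul_left' (c : ℝ) (X Z : Mn n) : ip (c • X) Z = c * ip X Z := by
  simp [ip, Matrix.smul_mul]

lemma ip_zero_left' (Z : Mn n) : ip 0 Z = 0 := by simp [ip]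

lemma dualSet_zero_mem (T : Set (Mn n)) : (0 : Mn n) ∈ dualSet T :=
  ⟨by simp [Matrix.IsSymm], fun Y _ => by simp [ip]⟩

lemma dualSet_add_mem {T : Set (Mn n)} {P P' : Mn n} (h : P ∈ dualSet T) (h' : P' ∈ dualSet T) :
    P + P' ∈ dualSet T :=
  ⟨h.1.add h'.1, fun Y hY => by rw [ip_add_left']; exact add_nonneg (h.2 Y hY) (h'.2 Y hY)⟩

lemma dualSet_smul_mem {T : Set (Mn n)} {c : ℝ} (hc : 0 ≤ c) {P : Mn n} (h : P ∈ dualSet T) :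
    c • P ∈ dualSet T :=
  ⟨h.1.smul c, fun Y hY => by rw [ip_smul_left']; exact mul_nonneg hc (h.2 Y hY)⟩

lemma rangeLstar_zero_mem : (0 : Mn n) ∈ S.rangeLstar :=
  ⟨by simp [Matrix.IsSymm], fun Y _ _ => by simp [ip]⟩

lemma rangeLstar_add_mem {P P' : Mn n} (h : P ∈ S.rangeLstar) (h' : P' ∈ S.rangeLstar) :
    P + P' ∈ S.rangeLstar :=
  ⟨h.1.add h'.1, fun Y hY hL => by rw [ip_add_left', h.2 Y hY hL, h'.2 Y hY hL, add_zero]⟩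

lemma rangeLstar_smul_mem (c : ℝ) {P : Mn n} (h : P ∈ S.rangeLstar) :
    c • P ∈ S.rangeLstar :=
  ⟨h.1.smul c, fun Y hY hL => by rw [ip_smul_left', h.2 Y hY hL, mul_zero]⟩

lemma lift_zero_mem : (0 : Mn n) ∈ S.lift :=
  ⟨0, dualSet_zero_mem _, 0, rangeLstar_zero_mem S, by simp⟩

lemma lift_add_mem {X X' : Mn n} (h : X ∈ S.lift) (h' : X' ∈ S.lift) : X + X' ∈ S.lift := by
  obtain ⟨P, hP, Q, hQ, rfl⟩ := h
  obtain ⟨P', hP', Q', hQ', rfl⟩ := h'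
  exact ⟨P + P', dualSet_add_mem hP hP', Q + Q', rangeLstar_add_mem S hQ hQ', by abel⟩

lemma lift_smul_mem {c : ℝ} (hc : 0 ≤ c) {X : Mn n} (h : X ∈ S.lift) : c • X ∈ S.lift := by
  obtain ⟨P, hP, Q, hQ, rfl⟩ := h
  exact ⟨c • P, dualSet_smul_mem hc hP, c • Q, rangeLstar_smul_mem S c hQ, by
    rw [smul_add]⟩

lemma lift_convex : Convex ℝ S.lift := fun x hx y hy a b ha hb _ =>
  lift_add_mem S (lift_smul_mem S ha hx) (lift_smul_mem S hb hy)

lemma lift_symm {X : Mn n} (h : X ∈ S.lift) : X.IsSymm := by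
  obtain ⟨P, hP, Q, hQ, rfl⟩ := h
  exact hP.1.add hQ.1

lemma lift_subset_dualK :
    S.lift ⊆ {X : Mn n | X.IsSymm ∧ ∀ Y ∈ S.K, 0 ≤ ip X Y} := by
  rintro X ⟨P, hP, Q, hQ, rfl⟩
  refine ⟨hP.1.add hQ.1, fun Y hY => ?_⟩
  rw [ip_add_left', hQ.2 Y (S.Khat_symm Y hY.1) hY.2, add_zero]
  exact hP.2 Y hY.1

/-- Closedness of `lift` under the Slater condition. -/
lemma isClosed_lift {x₀ : Mn n} (hx₀ : x₀.IsSymm) (hx₀L : S.L x₀ = 0) {ε : ℝ} (hε : 0 < ε)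
    (hball : ∀ M : Mn n, M.IsSymm → ‖(eMap M - eMap x₀ : En n)‖ < ε → M ∈ S.Khat) :
    IsClosed S.lift := by
  apply IsSeqClosed.isClosed
  intro x p hx hlim
  choose P hP Q hQ hxeq using hx
  -- the bound on the `P` part
  have hbd : ∀ j, (ε/2) * ‖(eMap (P j) : En n)‖ ≤ ipf (x j) x₀ := by
    intro j
    have h1 : (ε/2) * ‖(eMap (P j) : En n)‖ ≤ ipf (P j) x₀ := by
      apply ball_dual_bound hx₀ hε hball (hP j).1
      intro Y hY
      rw [← ip_eq_ipf (S.Khat_symm Y hY)]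
      exact (hP j).2 Y hY
    have h2 : ipf (x j) x₀ = ipf (P j) x₀ + ipf (Q j) x₀ := by
      rw [hxeq j, ipf_add_left]
    have h3 : ipf (Q j) x₀ = 0 := by
      rw [← ip_eq_ipf hx₀]
      exact (hQ j).2 x₀ hx₀ hx₀L
    rw [h2, h3, add_zero]; exact h1
  -- boundedness
  have htd : Filter.Tendsto (fun j => ipf (x j) x₀) Filter.atTop (nhds (ipf p x₀)) :=
    ((continuous_ipf_left x₀).tendsto p).comp hlim
  obtain ⟨B, hB⟩ := htd.bddAbove_range
  have hBub : ∀ j, ipf (x j) x₀ ≤ B := fun j => hB (Set.mem_range_self j)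
  have hnorm : ∀ j, ‖(eMap (P j) : En n)‖ ≤ B / (ε/2) := by
    intro j
    rw [le_div_iff₀ (by linarith)]
    calc ‖(eMap (P j) : En n)‖ * (ε/2) = (ε/2) * ‖(eMap (P j) : En n)‖ := mul_comm _ _
      _ ≤ ipf (x j) x₀ := hbd j
      _ ≤ B := hBub j
  -- extract a convergent subsequence of the `P` part
  have hmem : ∀ j, (eMap (P j) : En n) ∈ Metric.closedBall (0 : En n) (B / (ε/2)) := by
    intro j
    rw [Metric.mem_closedBall, dist_zero_right]
    exact hnorm j
  obtain ⟨a, _, φ, hφ, htend⟩ :=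
    (isCompact_closedBall (0 : En n) (B / (ε/2))).tendsto_subseq hmem
  have hPl : Filter.Tendsto (fun l => P (φ l)) Filter.atTop (nhds (eMap.symm a)) := by
    have := (eMap_symm_cont.tendsto a).comp htend
    simpa [Function.comp_def] using this
  have hQl : Filter.Tendsto (fun l => Q (φ l)) Filter.atTop (nhds (p - eMap.symm a)) := by
    have hx' : Filter.Tendsto (fun l => x (φ l)) Filter.atTop (nhds p) :=
      hlim.comp (hφ.tendsto_atTop)
    have : (fun l => Q (φ l)) = fun l => x (φ l) - P (φ l) := by
      funext l; rw [hxeq (φ l)]; abel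
    rw [this]
    exact hx'.sub hPl
  have hPmem : eMap.symm a ∈ dualSet S.Khat :=
    (isClosed_dualSet S.Khat).mem_of_tendsto hPl (Filter.Eventually.of_forall fun l => hP (φ l))
  have hQmem : p - eMap.symm a ∈ S.rangeLstar :=
    (isClosed_rangeLstar S).mem_of_tendsto hQl (Filter.Eventually.of_forall fun l => hQ (φ l))
  exact ⟨eMap.symm a, hPmem, p - eMap.symm a, hQmem, by abel⟩

/-- The key identification: `lift` equals the dual cone of `K` (within `Sym`). -/
lemma lift_eq_dualK {x₀ : Mn n} (hx₀ : x₀.IsSymm) (hx₀L : S.L x₀ = 0) {ε : ℝ} (hε : 0 < ε)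
    (hball : ∀ M : Mn n, M.IsSymm → ‖(eMap M - eMap x₀ : En n)‖ < ε → M ∈ S.Khat) :
    S.lift = {X : Mn n | X.IsSymm ∧ ∀ Y ∈ S.K, 0 ≤ ip X Y} := by
  have h0Khat : (0 : Mn n) ∈ S.Khat := by
    have hx₀K : x₀ ∈ S.Khat := hball x₀ hx₀ (by simp [hε])
    simpa using S.Khat_smul 0 le_rfl x₀ hx₀K
  apply Set.Subset.antisymm (lift_subset_dualK S)
  rintro X ⟨hXs, hXd⟩
  by_contra hXC
  obtain ⟨G, hGsym, hGpos, hGX⟩ := sep_point_closed_cone (fun Y hY => lift_symm S hY)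
    (lift_convex S) (isClosed_lift S hx₀ hx₀L hε hball) (lift_zero_mem S)
    (fun c hc Y hY => lift_smul_mem S hc hY) hXs hXC
  have hGKhat : G ∈ S.Khat := by
    apply mem_Khat_of_dual S h0Khat hGsym
    intro P hP
    exact hGpos P ⟨P, hP, 0, rangeLstar_zero_mem S, by simp⟩
  have hGL : S.L G = 0 := by
    apply Lzero_of_perp S hGsym
    intro Q hQ
    have h1 : 0 ≤ ipf G Q := hGpos Q ⟨0, dualSet_zero_mem _, Q, hQ, by simp⟩
    have h2 : 0 ≤ ipf G (-Q) := by
      refine hGpos (-Q) ⟨0, dualSet_zero_mem _, -Q, ?_, by simp⟩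
      simpa using rangeLstar_smul_mem S (-1) hQ
    rw [ipf_comm, ipf_neg_left, ipf_comm] at h2
    linarith
  have := hXd G ⟨hGKhat, hGL⟩
  rw [ip_eq_ipf hGsym, ipf_comm] at this
  linarith

end AuxLift
section AuxMain

variable {n k : ℕ}

instance : IsTopologicalAddGroup (Matrix (Fin n) (Fin n) ℝ) :=
  inferInstanceAs (IsTopologicalAddGroup (Fin n → Fin n → ℝ))

instance : ContinuousSMul ℝ (Matrix (Fin n) (Fin n) ℝ) :=
  inferInstanceAs (ContinuousSMul ℝ (Fin n → Fin n → ℝ))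

lemma ipf_smul_right (c : ℝ) (Z X : Mn n) : ipf Z (c • X) = c * ipf Z X := by
  rw [ipf_comm, ipf_smul_left, ipf_comm]

lemma ipf_sub_right (Z X Y : Mn n) : ipf Z (X - Y) = ipf Z X - ipf Z Y := by
  rw [ipf_comm, ipf_sub_left, ipf_comm X Z, ipf_comm Y Z]

lemma ipf_neg_right (Z X : Mn n) : ipf Z (-X) = - ipf Z X := by
  rw [ipf_comm, ipf_neg_left, ipf_comm]

lemma ip_neg_left' (Z Y : Mn n) : ip (-Z) Y = - ip Z Y := by
  simp [ip, Matrix.neg_mul]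

lemma isSymm_neg {X : Mn n} (h : X.IsSymm) : (-X).IsSymm := by
  unfold Matrix.IsSymm at *
  rw [Matrix.transpose_neg, h]

lemma isSymm_sum_smul_stensor (y : Finset (Fin n) → ℝ) :
    (∑ U : Finset (Fin n), y U • stensor U).IsSymm := by
  unfold Matrix.IsSymm
  rw [Matrix.transpose_sum]
  exact Finset.sum_congr rfl fun U _ => by
    rw [Matrix.transpose_smul, stensor_isSymm U]

variable (S : ConicSetting n k)

lemma continuous_L : Continuous fun X : Mn n => S.L X :=
  S.L.continuous_of_finiteDimensional

lemma isClosed_K : IsClosed S.K := by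
  have h : S.K = S.Khat ∩ (fun X : Mn n => S.L X) ⁻¹' {0} := by
    ext X; simp [ConicSetting.K]
  rw [h]
  exact S.Khat_closed.inter (isClosed_singleton.preimage (continuous_L S))

end AuxMain
/-- strong gauge duality for `fevc`: under the conic assumptions, for
every `Z ∈ K*` the infimum defining `fevc(Z)` is attained, and `fevc(Z)` equals
`max{⟨Z,X⟩ : X ∈ K, s_Uᵀ X s_U ≤ 1 for all U ∈ F(A)}`, the maximum being attained.
In particular `fevc` is the dual gauge of `maxq`. -/
theorem fevc_strong_gauge_duality {n k : ℕ} (hn : 1 ≤ n) (S : ConicSetting n k)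
    (hS : S.Assumptions) (Z : Matrix (Fin n) (Fin n) ℝ) (hZ : Z ∈ S.Kstar) :
    (∃ y : Finset (Fin n) → ℝ, S.CoverFeas Z y ∧
      (∑ U : Finset (Fin n), y U) = S.fevc Z) ∧
    (∃ X ∈ S.K, (∀ U ∈ S.FA, qform X (sgn U) ≤ 1) ∧ ip Z X = S.fevc Z ∧
      ∀ X' ∈ S.K, (∀ U ∈ S.FA, qform X' (sgn U) ≤ 1) → ip Z X' ≤ S.fevc Z) := by
  classical
  -- Slater data
  obtain ⟨Xs, hXs0, hXsInt, hXsL⟩ := hS.Khat_slater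
  obtain ⟨ε₁, hε₁, hball₁⟩ := interior_symm_subtype Xs hXsInt
  have hXsSymm : (Xs : Mn n).IsSymm := Xs.2
  have hliftEq := lift_eq_dualK S hXsSymm hXsL hε₁ hball₁
  have hliftClosed := isClosed_lift S hXsSymm hXsL hε₁ hball₁
  have h0Khat : (0 : Mn n) ∈ S.Khat := by
    have hmem : (Xs : Mn n) ∈ S.Khat := hball₁ _ hXsSymm (by simpa using hε₁)
    simpa using S.Khat_smul 0 le_rfl _ hmem
  have h0K : (0 : Mn n) ∈ S.K := ⟨h0Khat, map_zero _⟩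
  -- interior point of the cut cone
  obtain ⟨W₀s, hW₀Int⟩ := hS.cut_interior
  obtain ⟨ε₂, hε₂, hball₂⟩ := interior_symm_subtype W₀s hW₀Int
  set W₀ : Mn n := (W₀s : Mn n) with hW₀def
  have hW₀mem : W₀ ∈ S.coneCUT := by
    have h := interior_subset hW₀Int
    exact h
  obtain ⟨y₀, hy₀nn, hy₀supp, hy₀eq⟩ := hW₀mem
  have hW₀symm : W₀.IsSymm := by rw [hy₀eq]; exact isSymm_sum_smul_stensor y₀
  -- F(A) is nonempty
  have hFA : ∃ U₀, U₀ ∈ S.FA := by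
    by_contra hno
    push_neg at hno
    have hcc : ∀ V ∈ S.coneCUT, V = 0 := by
      rintro V ⟨y, hynn, hysupp, rfl⟩
      exact Finset.sum_eq_zero fun U _ => by rw [hysupp U (hno U), zero_smul]
    have hW₀0 : W₀ = 0 := hcc _ ⟨y₀, hy₀nn, hy₀supp, hy₀eq⟩
    set i0 : Fin n := ⟨0, hn⟩
    have h1ne : (1 : Mn n) ≠ 0 := fun h => by
      have h2 := congrFun (congrFun h i0) i0
      simp only [Matrix.one_apply_eq, Matrix.zero_apply] at h2
      exact one_ne_zero h2
    have hnorm1 : 0 < ‖(eMap (1 : Mn n) : En n)‖ :=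
      norm_pos_iff.mpr fun h => h1ne (eMap.map_eq_zero_iff.mp h)
    set c : ℝ := ε₂ / (2 * ‖(eMap (1 : Mn n) : En n)‖) with hc
    have hcpos : 0 < c := by positivity
    have hMmem : (c • (1 : Mn n)) ∈ S.coneCUT := by
      apply hball₂ _ ((Matrix.isSymm_one).smul c)
      rw [hW₀0]
      have : (eMap (c • (1:Mn n)) - eMap (0:Mn n) : En n) = c • eMap (1:Mn n) := by
        rw [map_zero, sub_zero, _root_.map_smul]
      rw [this, norm_smul, Real.norm_eq_abs, abs_of_pos hcpos, hc]
      rw [div_mul_eq_mul_div, mul_comm]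
      rw [div_lt_iff₀ (by positivity)]
      nlinarith [hnorm1, hε₂]
    have h4 := hcc _ hMmem
    have h3 := congrFun (congrFun h4 i0) i0
    simp only [Matrix.smul_apply, Matrix.one_apply_eq, Matrix.zero_apply, smul_eq_mul,
      mul_one] at h3
    exact ne_of_gt hcpos h3
  obtain ⟨U₀, hU₀⟩ := hFA
  -- positivity of the cut pairings on K
  have hstenpos : ∀ X ∈ S.K, ∀ U ∈ S.FA, 0 ≤ ipf (stensor U) X := by
    intro X hX U hU
    have h := (hS.K_sub_Astar hX).2 (stensor U) hU
    rwa [ip_eq_ipf (stensor_isSymm U), ipf_comm] at h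
  -- coercivity on K
  have hcoerc : ∀ X ∈ S.K, (ε₂/2) * ‖(eMap X : En n)‖ ≤ ipf X W₀ := by
    intro X hX
    apply ball_dual_bound hW₀symm hε₂ hball₂ (S.Khat_symm _ hX.1)
    rintro Y ⟨y, hynn, hysupp, rfl⟩
    rw [ipf_comm, ipf_sum_left]
    apply Finset.sum_nonneg
    intro U _
    rw [ipf_smul_left]
    by_cases h : U ∈ S.FA
    · exact mul_nonneg (hynn U) (hstenpos X hX U h)
    · rw [hysupp U h, zero_mul]
  -- the feasible set of the max problem
  set Feas : Set (Mn n) := {X | X ∈ S.K ∧ ∀ U ∈ S.FA, ipf (stensor U) X ≤ 1} with hFeasdef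
  have h0Feas : (0 : Mn n) ∈ Feas := ⟨h0K, fun U _ => by simp [ipf]⟩
  have hFeasClosed : IsClosed Feas := by
    have h : Feas = S.K ∩ ⋂ U ∈ S.FA, {X : Mn n | ipf (stensor U) X ≤ 1} := by
      ext X; simp only [hFeasdef, Set.mem_setOf_eq, Set.mem_inter_iff, Set.mem_iInter]
    rw [h]
    exact (isClosed_K S).inter (isClosed_biInter fun U _ =>
      isClosed_le (continuous_ipf_right _) continuous_const)
  set B₀ : ℝ := ∑ U : Finset (Fin n), y₀ U with hB₀
  have hFeasBound : ∀ X ∈ Feas, ‖(eMap X : En n)‖ ≤ B₀ / (ε₂/2) := by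
    intro X hX
    have h1 : ipf X W₀ ≤ B₀ := by
      rw [hy₀eq, ipf_comm, ipf_sum_left, hB₀]
      apply Finset.sum_le_sum
      intro U _
      rw [ipf_smul_left]
      by_cases h : U ∈ S.FA
      · calc y₀ U * ipf (stensor U) X ≤ y₀ U * 1 :=
              mul_le_mul_of_nonneg_left (hX.2 U h) (hy₀nn U)
          _ = y₀ U := mul_one _
      · rw [hy₀supp U h, zero_mul]
    rw [le_div_iff₀ (by linarith)]
    calc ‖(eMap X : En n)‖ * (ε₂/2) = (ε₂/2) * ‖(eMap X : En n)‖ := mul_comm _ _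
      _ ≤ ipf X W₀ := hcoerc X hX.1
      _ ≤ B₀ := h1
  have hFeasCompact : IsCompact ((eMap : Mn n → En n) '' Feas) := by
    apply IsCompact.of_isClosed_subset (isCompact_closedBall (0 : En n) (B₀ / (ε₂/2)))
    · have : (eMap : Mn n → En n) '' Feas = (eH : Mn n → En n) '' Feas := rfl
      rw [this, Homeomorph.isClosed_image]
      exact hFeasClosed
    · rintro v ⟨X, hX, rfl⟩
      rw [Metric.mem_closedBall, dist_zero_right]
      exact hFeasBound X hX
  -- the maximizer
  obtain ⟨vstar, hvmem, hvmax⟩ := hFeasCompact.exists_isMaxOn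
    ⟨eMap 0, Set.mem_image_of_mem _ h0Feas⟩
    (Continuous.continuousOn (continuous_const.inner continuous_id : Continuous
      (fun v : En n => (inner ℝ (eMap Z) v : ℝ))))
  obtain ⟨Xstar, hXstarFeas, rfl⟩ := hvmem
  set m : ℝ := ipf Z Xstar with hmdef
  have hmax : ∀ X ∈ Feas, ipf Z X ≤ m := by
    intro X hX
    have h : (inner ℝ (eMap Z) (eMap X) : ℝ) ≤ (inner ℝ (eMap Z) (eMap Xstar) : ℝ) :=
      hvmax (Set.mem_image_of_mem _ hX)
    rwa [inner_eMap, inner_eMap] at h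
  have hm0 : 0 ≤ m := by
    have h := hmax 0 h0Feas
    simpa [ipf] using h
  -- weak duality
  have hweak : ∀ y, S.CoverFeas Z y → m ≤ ∑ U : Finset (Fin n), y U := by
    rintro y ⟨hynn, hysupp, hlift⟩
    have hXstarK := hXstarFeas.1
    have h1 : 0 ≤ ip ((∑ U : Finset (Fin n), y U • stensor U) - Z) Xstar :=
      (lift_subset_dualK S hlift).2 Xstar hXstarK
    rw [ip_eq_ipf (S.Khat_symm _ hXstarK.1), ipf_sub_left, ipf_sum_left] at h1
    have h2 : ∑ U : Finset (Fin n), ipf (y U • stensor U) Xstar ≤ ∑ U : Finset (Fin n), y U := by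
      apply Finset.sum_le_sum
      intro U _
      rw [ipf_smul_left]
      by_cases h : U ∈ S.FA
      · calc y U * ipf (stensor U) Xstar ≤ y U * 1 :=
              mul_le_mul_of_nonneg_left (hXstarFeas.2 U h) (hynn U)
          _ = y U := mul_one _
      · rw [hysupp U h, zero_mul]
    linarith
  -- strong duality: attainment of the cover at value `m`
  have hstrong : ∃ y, S.CoverFeas Z y ∧ (∑ U : Finset (Fin n), y U) = m := by
    rcases eq_or_lt_of_le hm0 with hm|hm
    · -- m = 0
      refine ⟨fun _ => 0, ⟨fun U => le_rfl, fun U _ => rfl, ?_⟩, by simp [← hm]⟩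
      have hsum0 : (∑ U : Finset (Fin n), (0:ℝ) • stensor U) = (0 : Mn n) := by simp
      rw [hsum0, zero_sub, hliftEq]
      refine ⟨isSymm_neg hZ.1, fun Y hY => ?_⟩
      have hZY : ipf Z Y ≤ 0 := by
        set c : ℝ := 1 + ∑ U : Finset (Fin n), max (ipf (stensor U) Y) 0 with hcdef
        have hsnn : 0 ≤ ∑ U : Finset (Fin n), max (ipf (stensor U) Y) 0 :=
          Finset.sum_nonneg fun U _ => le_max_right _ _
        have hc0 : 0 < c := by rw [hcdef]; linarith
        have hscaled : c⁻¹ • Y ∈ Feas := by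
          refine ⟨⟨S.Khat_smul _ (inv_nonneg.mpr hc0.le) _ hY.1, by
            rw [_root_.map_smul, hY.2, smul_zero]⟩, fun U hU => ?_⟩
          rw [ipf_smul_right]
          have h1 : ipf (stensor U) Y ≤ c := by
            have h2 : ipf (stensor U) Y ≤ max (ipf (stensor U) Y) 0 := le_max_left _ _
            have h3 : max (ipf (stensor U) Y) 0 ≤
                ∑ U' : Finset (Fin n), max (ipf (stensor U') Y) 0 :=
              Finset.single_le_sum (f := fun U' : Finset (Fin n) => max (ipf (stensor U') Y) 0)
                (fun U' _ => le_max_of_le_right le_rfl) (Finset.mem_univ U)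
            rw [hcdef]; linarith
          calc c⁻¹ * ipf (stensor U) Y ≤ c⁻¹ * c :=
                mul_le_mul_of_nonneg_left h1 (inv_nonneg.mpr hc0.le)
            _ = 1 := inv_mul_cancel₀ (ne_of_gt hc0)
        have h4 := hmax _ hscaled
        rw [ipf_smul_right, ← hm] at h4
        nlinarith [inv_pos.mpr hc0]
      rw [ip_neg_left', ip_eq_ipf' hZ.1]
      linarith
    · -- m > 0
      set Gset : Set (Mn n) := {V | ∃ y : Finset (Fin n) → ℝ, (∀ U, 0 ≤ y U) ∧
        (∀ U, U ∉ S.FA → y U = 0) ∧ (∑ U : Finset (Fin n), y U) = m ∧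
        ∃ Lf ∈ S.lift, V = (∑ U : Finset (Fin n), y U • stensor U) - Lf} with hGdef
      have hconc : ∀ U₁ ∈ S.FA, ∀ Lf ∈ S.lift, (m • stensor U₁ - Lf) ∈ Gset := by
        intro U₁ hU₁ Lf hLf
        refine ⟨fun U => if U = U₁ then m else 0,
          fun U => by dsimp only; split <;> simp [hm.le],
          fun U hU => if_neg (fun h => hU (by rw [h]; exact hU₁)), by simp, Lf, hLf, by
            simp [ite_smul]⟩
      have hGsymm : ∀ V ∈ Gset, Matrix.IsSymm V := by
        rintro V ⟨y, _, _, _, Lf, hLf, rfl⟩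
        exact (isSymm_sum_smul_stensor y).sub (lift_symm S hLf)
      have hGconv : Convex ℝ Gset := by
        rintro V ⟨y, hy1, hy2, hy3, Lf, hLf, rfl⟩ V' ⟨y', hy1', hy2', hy3', Lf', hLf', rfl⟩
          a b ha hb hab
        refine ⟨fun U => a * y U + b * y' U,
          fun U => add_nonneg (mul_nonneg ha (hy1 U)) (mul_nonneg hb (hy1' U)),
          fun U hU => by simp [hy2 U hU, hy2' U hU],
          ?_, a • Lf + b • Lf',
          lift_add_mem S (lift_smul_mem S ha hLf) (lift_smul_mem S hb hLf'), ?_⟩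
        · rw [Finset.sum_add_distrib, ← Finset.mul_sum, ← Finset.mul_sum, hy3, hy3',
            ← add_mul, hab, one_mul]
        · have h1 : a • (∑ U : Finset (Fin n), y U • stensor U) =
              ∑ U : Finset (Fin n), (a * y U) • stensor U := by
            rw [Finset.smul_sum]
            exact Finset.sum_congr rfl fun U _ => smul_smul a (y U) _
          have h2 : b • (∑ U : Finset (Fin n), y' U • stensor U) =
              ∑ U : Finset (Fin n), (b * y' U) • stensor U := by
            rw [Finset.smul_sum]
            exact Finset.sum_congr rfl fun U _ => smul_smul b (y' U) _
          have h3 : (∑ U : Finset (Fin n), (a * y U + b * y' U) • stensor U) =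
              (∑ U : Finset (Fin n), (a * y U) • stensor U) +
              ∑ U : Finset (Fin n), (b * y' U) • stensor U := by
            rw [← Finset.sum_add_distrib]
            exact Finset.sum_congr rfl fun U _ => add_smul _ _ _
          rw [smul_sub, smul_sub, h1, h2, h3]
          abel
      have hGclosed : IsClosed Gset := by
        apply IsSeqClosed.isClosed
        intro x p hx hlim
        choose y hy1 hy2 hy3 Lf hLf hxeq using hx
        have hybox : ∀ j, y j ∈ Set.pi Set.univ
            (fun _ : Finset (Fin n) => Set.Icc (0:ℝ) m) := by
          intro j U _
          refine ⟨hy1 j U, ?_⟩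
          have h1 : y j U ≤ ∑ U' : Finset (Fin n), y j U' :=
            Finset.single_le_sum (fun U' _ => hy1 j U') (Finset.mem_univ U)
          rw [hy3 j] at h1
          exact h1
        have hcomp : IsCompact (Set.pi Set.univ
            (fun _ : Finset (Fin n) => Set.Icc (0:ℝ) m)) :=
          isCompact_univ_pi fun _ => isCompact_Icc
        obtain ⟨ys, _, φ, hφ, hytend⟩ := hcomp.tendsto_subseq hybox
        have hyU : ∀ U, Filter.Tendsto (fun l => y (φ l) U) Filter.atTop (nhds (ys U)) :=
          fun U => tendsto_pi_nhds.mp hytend U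
        have hsumtend : Filter.Tendsto (fun l => ∑ U : Finset (Fin n), y (φ l) U • stensor U)
            Filter.atTop (nhds (∑ U : Finset (Fin n), ys U • stensor U)) :=
          tendsto_finset_sum _ fun U _ => (hyU U).smul_const (stensor U)
        have hLtend : Filter.Tendsto (fun l => Lf (φ l)) Filter.atTop
            (nhds ((∑ U : Finset (Fin n), ys U • stensor U) - p)) := by
          have heq : (fun l => Lf (φ l)) =
              fun l => (∑ U : Finset (Fin n), y (φ l) U • stensor U) - x (φ l) :=
            funext fun l => by rw [hxeq (φ l)]; abel
          rw [heq]
          exact hsumtend.sub (hlim.comp hφ.tendsto_atTop)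
        have hLmem : (∑ U : Finset (Fin n), ys U • stensor U) - p ∈ S.lift :=
          hliftClosed.mem_of_tendsto hLtend (Filter.Eventually.of_forall fun l => hLf (φ l))
        refine ⟨ys, fun U => ?_, fun U hU => ?_, ?_, _, hLmem, by abel⟩
        · exact ge_of_tendsto' (hyU U) fun l => hy1 (φ l) U
        · refine tendsto_nhds_unique (hyU U) ?_
          have heq : (fun l => y (φ l) U) = fun _ => (0:ℝ) :=
            funext fun l => hy2 (φ l) U hU
          rw [heq]
          exact tendsto_const_nhds
        · have h1 : Filter.Tendsto (fun l => ∑ U : Finset (Fin n), y (φ l) U)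
              Filter.atTop (nhds (∑ U : Finset (Fin n), ys U)) :=
            tendsto_finset_sum _ fun U _ => hyU U
          have heq : (fun l => ∑ U : Finset (Fin n), y (φ l) U) = fun _ => m :=
            funext fun l => hy3 (φ l)
          rw [heq] at h1
          exact tendsto_nhds_unique h1 tendsto_const_nhds
      have hZGset : Z ∈ Gset := by
        by_contra hnot
        obtain ⟨G, u, hGsym2, hGZ, hGgt⟩ := sep_point_closed hGsymm hGconv hGclosed hZ.1 hnot
        have hliftneg : ∀ l' ∈ S.lift, ipf G l' ≤ 0 := by
          intro l' hl'
          by_contra hpos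
          push_neg at hpos
          have hu0 : u < ipf G (m • stensor U₀) := by
            have := hGgt _ (by simpa using hconc U₀ hU₀ 0 (lift_zero_mem S))
            simpa using this
          set s : ℝ := (ipf G (m • stensor U₀) - u) / ipf G l' with hs
          have hs0 : 0 ≤ s := le_of_lt (div_pos (by linarith) hpos)
          have hmem2 := hGgt _ (hconc U₀ hU₀ _ (lift_smul_mem S hs0 hl'))
          rw [ipf_sub_right] at hmem2
          have hsl : ipf G (s • l') = ipf G (m • stensor U₀) - u := by
            rw [ipf_smul_right, hs, div_mul_cancel₀ _ (ne_of_gt hpos)]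
          rw [hsl] at hmem2
          linarith
        set H : Mn n := -G with hHdef
        have hHsymm : Matrix.IsSymm H := isSymm_neg hGsym2
        have hHd : ∀ l' ∈ S.lift, 0 ≤ ipf H l' := by
          intro l' hl'
          rw [hHdef, ipf_neg_left]
          linarith [hliftneg l' hl']
        have hHKhat : H ∈ S.Khat :=
          mem_Khat_of_dual S h0Khat hHsymm fun P hP =>
            hHd P ⟨P, hP, 0, rangeLstar_zero_mem S, by simp⟩
        have hHL : S.L H = 0 := by
          apply Lzero_of_perp S hHsymm
          intro Q hQ
          have h1 := hHd Q ⟨0, dualSet_zero_mem _, Q, hQ, by simp⟩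
          have h2 := hHd (-Q) ⟨0, dualSet_zero_mem _, -Q,
            (by simpa using rangeLstar_smul_mem S (-1) hQ), by simp⟩
          rw [ipf_neg_right] at h2
          linarith
        have hHK : H ∈ S.K := ⟨hHKhat, hHL⟩
        have hUb : ∀ U ∈ S.FA, u < m * ipf G (stensor U) := by
          intro U hU
          have h := hGgt _ (by simpa using hconc U hU 0 (lift_zero_mem S))
          rwa [ipf_smul_right] at h
        have hGH : ∀ U : Finset (Fin n), ipf (stensor U) H = - ipf G (stensor U) := by
          intro U
          rw [hHdef, ipf_neg_right, ipf_comm]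
        have hu_neg : u < 0 := by
          have h1 := hUb U₀ hU₀
          have h2 : 0 ≤ ipf (stensor U₀) H := hstenpos H hHK U₀ hU₀
          rw [hGH U₀] at h2
          nlinarith
        set β : ℝ := -u with hβ
        have hβ0 : 0 < β := by rw [hβ]; linarith
        set X' : Mn n := (m / β) • H with hX'def
        have hX'K : X' ∈ S.K :=
          ⟨S.Khat_smul _ (by positivity) _ hHKhat, by
            rw [hX'def, _root_.map_smul, hHL, smul_zero]⟩
        have hX'Feas : X' ∈ Feas := by
          refine ⟨hX'K, fun U hU => ?_⟩
          rw [hX'def, ipf_smul_right, hGH U]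
          have h1 := hUb U hU
          rw [div_mul_eq_mul_div, div_le_one hβ0]
          nlinarith
        have hfinal := hmax X' hX'Feas
        have hval : ipf Z X' = (m / β) * (- ipf G Z) := by
          rw [hX'def, ipf_smul_right, hHdef, ipf_neg_right, ipf_comm]
        rw [hval] at hfinal
        have hGZβ : β < - ipf G Z := by rw [hβ]; linarith
        have hmb : (m / β) * β = m := div_mul_cancel₀ m (ne_of_gt hβ0)
        nlinarith [div_pos hm hβ0]
      obtain ⟨y, hy1, hy2, hy3, Lf, hLf, hVeq⟩ := hZGset
      refine ⟨y, ⟨hy1, hy2, ?_⟩, hy3⟩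
      have heq : (∑ U : Finset (Fin n), y U • stensor U) - Z = Lf := by
        rw [hVeq]; abel
      rw [heq]
      exact hLf
  -- conclusion
  have hfevc : S.fevc Z = m := by
    obtain ⟨ystar, hcov, hsum⟩ := hstrong
    apply le_antisymm
    · exact csInf_le ⟨m, fun r ⟨y, hy, hr⟩ => hr ▸ hweak y hy⟩ ⟨ystar, hcov, hsum.symm⟩
    · exact le_csInf ⟨_, ystar, hcov, rfl⟩ fun r ⟨y, hy, hr⟩ => hr ▸ hweak y hy
  constructor
  · obtain ⟨ystar, hcov, hsum⟩ := hstrong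
    exact ⟨ystar, hcov, by rw [hsum, hfevc]⟩
  · refine ⟨Xstar, hXstarFeas.1, fun U hU => ?_, ?_, ?_⟩
    · rw [qform_eq_ipf]; exact hXstarFeas.2 U hU
    · rw [ip_eq_ipf' hZ.1, hfevc]
    · intro X' hX'K hX'q
      have hmem : X' ∈ Feas := ⟨hX'K, fun U hU => by
        rw [← qform_eq_ipf]; exact hX'q U hU⟩
      rw [ip_eq_ipf' hZ.1, hfevc]
      exact hmax X' hmem
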